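/- Let V be a finite set of atomic propositions partitioned into inputs I and outputs O, and let φ = (φ1 ∧ φ2) → ψ be an LTL formula with prop(φ) = V, prop(φ1) ∩ prop(φ2) = ∅, and prop(φ2) ∩ prop(ψ) = ∅. Assume that the LTL formula ¬φ2 is unrealizable over V and that there exists a counterstrategy for the language of ¬φ2 (so every word compatible with this counterstrategy satisfies φ2). Then φ1 → ψ is realizable over the variables V1 = prop(φ1) ∪ prop(ψ) (with inputs I ∩ V1 and outputs O ∩ V1) if and only if φ is realizable over V. -/

import Mathlib

namespace SpecDecomp

variable {α : Type*}

/-- Restriction of an infinite word: intersect each letter with `X`. -/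
def restrict (σ : ℕ → Set α) (X : Set α) : ℕ → Set α := fun n => σ n ∩ X

/-- Restriction of a finite word (history): intersect each letter with `X`. -/
def restrictFin (h : List (Set α)) (X : Set α) : List (Set α) := h.map (· ∩ X)

/-- Letterwise union of infinite words. -/
def wordUnion (σ₁ σ₂ : ℕ → Set α) : ℕ → Set α := fun n => σ₁ n ∪ σ₂ n

/-- The set of infinite words over the alphabet `2^W`. -/
def WordsOver (W : Set α) : Set (ℕ → Set α) := {σ | ∀ n, σ n ⊆ W}

/-- Non-contradictory composition of a language `L₁` over `2^{W₁}` and a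
language `L₂` over `2^{W₂}`. -/
def comp (L₁ : Set (ℕ → Set α)) (W₁ : Set α) (L₂ : Set (ℕ → Set α)) (W₂ : Set α) :
    Set (ℕ → Set α) :=
  {σ | ∃ σ₁ ∈ L₁, ∃ σ₂ ∈ L₂, restrict σ₁ W₂ = restrict σ₂ W₁ ∧ σ = wordUnion σ₁ σ₂}

/-- The finite history consisting of the first `n` letters of `σ`. -/
def hist (σ : ℕ → Set α) (n : ℕ) : List (Set α) := (List.range n).map σ

/-- An infinite word over `2^W` is compatible with the implementation `f`
(for variables `W`, inputs `Iw`, outputs `Ow`). -/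
def CompatibleImpl (W Iw Ow : Set α) (f : List (Set α) → Set α → Set α)
    (σ : ℕ → Set α) : Prop :=
  (∀ n, σ n ⊆ W) ∧ ∀ n, f (hist σ n) (σ n ∩ Iw) = σ n ∩ Ow

/-- The implementation `f` realizes the language `L`. -/
def Realizes (W Iw Ow : Set α) (f : List (Set α) → Set α → Set α)
    (L : Set (ℕ → Set α)) : Prop :=
  ∀ σ, CompatibleImpl W Iw Ow f σ → σ ∈ L

/-- `L` is realizable over variables `W` with inputs `Iw` and outputs `Ow`. -/
def Realizable (W Iw Ow : Set α) (L : Set (ℕ → Set α)) : Prop :=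
  ∃ f : List (Set α) → Set α → Set α,
    (∀ h i, f h i ⊆ Ow) ∧ Realizes W Iw Ow f L

/-- An infinite word over `2^W` is compatible with the counterstrategy `fc`. -/
def CompatibleCounter (W Iw : Set α) (fc : List (Set α) → Set α)
    (σ : ℕ → Set α) : Prop :=
  (∀ n, σ n ⊆ W) ∧ ∀ n, fc (hist σ n) = σ n ∩ Iw

/-- `fc` is a counterstrategy for `L`: every compatible word lies in the
complement of `L`. -/
def Counterstrategy (W Iw : Set α) (fc : List (Set α) → Set α)
    (L : Set (ℕ → Set α)) : Prop :=
  ∀ σ, CompatibleCounter W Iw fc σ → σ ∉ L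

/-- Syntax of linear-time temporal logic. -/
inductive LTL (α : Type*) where
  | atom : α → LTL α
  | tt : LTL α
  | not : LTL α → LTL α
  | or : LTL α → LTL α → LTL α
  | and : LTL α → LTL α → LTL α
  | next : LTL α → LTL α
  | until_ : LTL α → LTL α → LTL α

namespace LTL

/-- The set of atomic propositions occurring in a formula
(`true` contributes no atomic propositions). -/
def props : LTL α → Set α
  | atom a => {a}
  | tt => ∅
  | not φ => props φ
  | or φ ψ => props φ ∪ props ψ
  | and φ ψ => props φ ∪ props ψ
  | next φ => props φ
  | until_ φ ψ => props φ ∪ props ψ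

/-- Satisfaction of an LTL formula at position `n` of the infinite word `σ`. -/
def SatAt (σ : ℕ → Set α) : LTL α → ℕ → Prop
  | atom a, n => a ∈ σ n
  | tt, _ => True
  | not φ, n => ¬ SatAt σ φ n
  | or φ ψ, n => SatAt σ φ n ∨ SatAt σ ψ n
  | and φ ψ, n => SatAt σ φ n ∧ SatAt σ ψ n
  | next φ, n => SatAt σ φ (n + 1)
  | until_ φ ψ, n =>
      ∃ m, n ≤ m ∧ SatAt σ ψ m ∧ ∀ k, n ≤ k → k < m → SatAt σ φ k

/-- `σ ⊨ φ`. -/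
def Sat (σ : ℕ → Set α) (φ : LTL α) : Prop := SatAt σ φ 0

/-- Implication, as the usual abbreviation `φ → ψ ≡ ¬φ ∨ ψ`. -/
def impl (φ ψ : LTL α) : LTL α := or (not φ) ψ

/-- The language of `φ` over the alphabet `2^W`. -/
def LangOver (φ : LTL α) (W : Set α) : Set (ℕ → Set α) :=
  {σ | (∀ n, σ n ⊆ W) ∧ Sat σ φ}

end LTL


/-! ### Auxiliary lemmas -/

theorem satAt_congr {σ σ' : ℕ → Set α} {P : Set α} (h : ∀ n, σ n ∩ P = σ' n ∩ P) :
    ∀ χ : LTL α, χ.props ⊆ P → ∀ n, χ.SatAt σ n ↔ χ.SatAt σ' n := by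
  intro χ
  induction χ with
  | atom a =>
    intro hP n
    have ha : a ∈ P := hP rfl
    simp only [LTL.SatAt]
    constructor
    · intro hm
      have : a ∈ σ' n ∩ P := (h n) ▸ (⟨hm, ha⟩ : a ∈ σ n ∩ P)
      exact this.1
    · intro hm
      have : a ∈ σ n ∩ P := (h n).symm ▸ (⟨hm, ha⟩ : a ∈ σ' n ∩ P)
      exact this.1
  | tt => intro _ n; simp [LTL.SatAt]
  | not φ ih => intro hP n; simp only [LTL.SatAt]; rw [ih hP n]
  | or φ ψ ih₁ ih₂ =>
    intro hP n
    simp only [LTL.SatAt]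
    rw [ih₁ (Set.subset_union_left.trans hP) n, ih₂ (Set.subset_union_right.trans hP) n]
  | and φ ψ ih₁ ih₂ =>
    intro hP n
    simp only [LTL.SatAt]
    rw [ih₁ (Set.subset_union_left.trans hP) n, ih₂ (Set.subset_union_right.trans hP) n]
  | next φ ih => intro hP n; simp only [LTL.SatAt]; rw [ih hP (n + 1)]
  | until_ φ ψ ih₁ ih₂ =>
    intro hP n
    have h₁ := ih₁ (Set.subset_union_left.trans hP)
    have h₂ := ih₂ (Set.subset_union_right.trans hP)
    simp only [LTL.SatAt]
    constructor
    · rintro ⟨m, hm, hψm, hφ⟩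
      exact ⟨m, hm, (h₂ m).mp hψm, fun k hk1 hk2 => (h₁ k).mp (hφ k hk1 hk2)⟩
    · rintro ⟨m, hm, hψm, hφ⟩
      exact ⟨m, hm, (h₂ m).mpr hψm, fun k hk1 hk2 => (h₁ k).mpr (hφ k hk1 hk2)⟩

theorem hist_succ (σ : ℕ → Set α) (n : ℕ) : hist σ (n + 1) = hist σ n ++ [σ n] := by
  simp [hist, List.range_succ]

/-- Reconstruction of the combined play (for `f`) and the shadow play (for the
counterstrategy `fc`) from a reversed history over `V₁`. -/
def et (f : List (Set α) → Set α → Set α) (fc : List (Set α) → Set α) (I V₂ : Set α) :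
    List (Set α) → List (Set α) × List (Set α)
  | [] => ([], [])
  | x :: r =>
    let p := et f fc I V₂ r
    let i := (x ∩ I) ∪ (fc p.2 ∩ V₂)
    (p.1 ++ [i ∪ f p.1 i], p.2 ++ [fc p.2 ∪ f p.1 i])

/-- dropping an assumption `φ₂` that shares no variables with
`φ₁` and `ψ` and whose negation is unrealizable preserves equirealizability. -/
theorem assumption_dropping
    (V I O : Set α) (hVfin : V.Finite) (hpart : I ∪ O = V) (hIO : I ∩ O = ∅)
    (φ₁ φ₂ ψ : LTL α)
    (hV : ((φ₁.and φ₂).impl ψ).props = V)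
    (h₁₂ : φ₁.props ∩ φ₂.props = ∅)
    (h₂ψ : φ₂.props ∩ ψ.props = ∅)
    (hunreal : ¬ Realizable V I O ((LTL.not φ₂).LangOver V))
    (hcs : ∃ fc : List (Set α) → Set α, (∀ h, fc h ⊆ I) ∧
      Counterstrategy V I fc ((LTL.not φ₂).LangOver V)) :
    Realizable (φ₁.props ∪ ψ.props) (I ∩ (φ₁.props ∪ ψ.props))
        (O ∩ (φ₁.props ∪ ψ.props)) ((φ₁.impl ψ).LangOver (φ₁.props ∪ ψ.props)) ↔
      Realizable V I O (((φ₁.and φ₂).impl ψ).LangOver V) := by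
  classical
  obtain ⟨fc, hfcI, hfc⟩ := hcs
  have hVeq : (φ₁.props ∪ φ₂.props) ∪ ψ.props = V := by
    simpa [LTL.impl, LTL.props] using hV
  set V₁ : Set α := φ₁.props ∪ ψ.props with hV₁def
  set V₂ : Set α := φ₂.props with hV₂def
  have hV₁V : V₁ ⊆ V := by
    rw [← hVeq]; rintro a (h | h)
    · exact Or.inl (Or.inl h)
    · exact Or.inr h
  have hV₂V : V₂ ⊆ V := by
    rw [← hVeq]; exact fun a ha => Or.inl (Or.inr ha)
  have hd : ∀ a ∈ V₁, a ∉ V₂ := by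
    rintro a (h | h) hb
    · exact Set.eq_empty_iff_forall_notMem.mp h₁₂ a ⟨h, hb⟩
    · exact Set.eq_empty_iff_forall_notMem.mp h₂ψ a ⟨hb, h⟩
  have hIOd : ∀ a ∈ I, a ∉ O := fun a h1 h2 =>
    Set.eq_empty_iff_forall_notMem.mp hIO a ⟨h1, h2⟩
  have hIV : I ⊆ V := hpart ▸ Set.subset_union_left
  have hOV : O ⊆ V := hpart ▸ Set.subset_union_right
  have hpropsImpl : (φ₁.impl ψ).props = V₁ := by simp [LTL.impl, LTL.props, hV₁def]
  constructor
  · -- forward direction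
    rintro ⟨f₁, hf₁O, hf₁⟩
    refine ⟨fun h i => f₁ (restrictFin h V₁) (i ∩ V₁),
      fun h i => fun a ha => (hf₁O _ _ ha).1, ?_⟩
    rintro σ ⟨hσV, hσf⟩
    set σ' : ℕ → Set α := restrict σ V₁ with hσ'def
    have hhist : ∀ n, restrictFin (hist σ n) V₁ = hist σ' n := by
      intro n
      simp only [restrictFin, hist, List.map_map]
      rfl
    have hσf' : ∀ n, f₁ (hist σ' n) (σ n ∩ I ∩ V₁) = σ n ∩ O := by
      intro n
      have h0 := hσf n
      simp only [hhist n] at h0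
      exact h0
    have hOsub : ∀ n, σ n ∩ O ⊆ V₁ := by
      intro n
      rw [← hσf' n]
      exact fun a ha => (hf₁O _ _ ha).2
    have hcomp : CompatibleImpl V₁ (I ∩ V₁) (O ∩ V₁) f₁ σ' := by
      refine ⟨fun n => Set.inter_subset_right, fun n => ?_⟩
      have e1 : σ' n ∩ (I ∩ V₁) = σ n ∩ I ∩ V₁ := by
        simp only [hσ'def, restrict]; ext a; simp; tauto
      have e2 : σ' n ∩ (O ∩ V₁) = σ n ∩ O := by
        simp only [hσ'def, restrict]
        ext a
        simp only [Set.mem_inter_iff]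
        constructor
        · rintro ⟨⟨h1, _⟩, h2, _⟩; exact ⟨h1, h2⟩
        · rintro ⟨h1, h2⟩
          have h3 := hOsub n ⟨h1, h2⟩
          exact ⟨⟨h1, h3⟩, h2, h3⟩
      rw [e1, e2, hσf' n]
    have hmem := hf₁ σ' hcomp
    have hag : ∀ n, σ' n ∩ V₁ = σ n ∩ V₁ := by
      intro n; simp [hσ'def, restrict, Set.inter_assoc]
    have hsat : (φ₁.impl ψ).Sat σ :=
      (satAt_congr hag (φ₁.impl ψ) (by rw [hpropsImpl]) 0).mp hmem.2
    refine ⟨hσV, ?_⟩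
    have h5 : ¬ φ₁.SatAt σ 0 ∨ ψ.SatAt σ 0 := hsat
    show ¬ ((φ₁.and φ₂).SatAt σ 0) ∨ ψ.SatAt σ 0
    rcases h5 with h | h
    · exact Or.inl (fun hc => h hc.1)
    · exact Or.inr h
  · -- backward direction
    rintro ⟨f, hfO, hf⟩
    refine ⟨fun h i =>
        f (et f fc I V₂ h.reverse).1 (i ∪ (fc (et f fc I V₂ h.reverse).2 ∩ V₂)) ∩ V₁,
      fun h i => fun a ha => ⟨hfO _ _ ha.1, ha.2⟩, ?_⟩
    rintro σ₁ ⟨hσ₁V, hσ₁f⟩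
    set p : ℕ → List (Set α) × List (Set α) :=
      fun n => et f fc I V₂ ((hist σ₁ n).reverse) with hp
    set inp : ℕ → Set α := fun n => (σ₁ n ∩ I) ∪ (fc (p n).2 ∩ V₂) with hinp
    set σ : ℕ → Set α := fun n => inp n ∪ f (p n).1 (inp n) with hσdef
    set τ : ℕ → Set α := fun n => fc (p n).2 ∪ f (p n).1 (inp n) with hτdef
    have hrev : ∀ n, (hist σ₁ (n + 1)).reverse = σ₁ n :: (hist σ₁ n).reverse := by
      intro n; rw [hist_succ]; simp
    have hstep : ∀ n, p (n + 1) = ((p n).1 ++ [σ n], (p n).2 ++ [τ n]) := by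
      intro n
      simp only [hp, hrev n, et]
      rfl
    have hEk : ∀ n, (p n).1 = hist σ n ∧ (p n).2 = hist τ n := by
      intro n
      induction n with
      | zero => constructor <;> simp [hp, hist, et]
      | succ n ih =>
        rw [hstep n, hist_succ, hist_succ, ih.1, ih.2]
        exact ⟨rfl, rfl⟩
    have hσ₁sub : ∀ n, σ₁ n ⊆ V₁ := hσ₁V
    have hinpI : ∀ n, σ n ∩ I = inp n := by
      intro n
      ext a
      simp only [hσdef, hinp, Set.mem_inter_iff, Set.mem_union]
      constructor
      · rintro ⟨h1 | h1, h2⟩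
        · exact h1
        · exact absurd (hfO _ _ h1) (fun hO => hIOd a h2 hO)
      · rintro (⟨h1, h2⟩ | ⟨h1, h2⟩)
        · exact ⟨Or.inl (Or.inl ⟨h1, h2⟩), h2⟩
        · exact ⟨Or.inl (Or.inr ⟨h1, h2⟩), hfcI _ h1⟩
    have hσO : ∀ n, σ n ∩ O = f (p n).1 (inp n) := by
      intro n
      ext a
      simp only [hσdef, hinp, Set.mem_inter_iff, Set.mem_union]
      constructor
      · rintro ⟨h1 | h1, h2⟩
        · rcases h1 with ⟨h3, h4⟩ | ⟨h3, h4⟩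
          · exact absurd h2 (hIOd a h4)
          · exact absurd h2 (hIOd a (hfcI _ h3))
        · exact h1
      · intro h1
        exact ⟨Or.inr h1, hfO _ _ h1⟩
    have hσV : ∀ n, σ n ⊆ V := by
      rintro n a (h | h)
      · rcases h with ⟨_, h⟩ | ⟨h, _⟩
        · exact hIV h
        · exact hIV (hfcI _ h)
      · exact hOV (hfO _ _ h)
    have hτV : ∀ n, τ n ⊆ V := by
      rintro n a (h | h)
      · exact hIV (hfcI _ h)
      · exact hOV (hfO _ _ h)
    have hσcomp : CompatibleImpl V I O f σ := by
      refine ⟨hσV, fun n => ?_⟩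
      rw [hinpI n, ← (hEk n).1, hσO n]
    have hσφ := hf σ hσcomp
    have hτcomp : CompatibleCounter V I fc τ := by
      refine ⟨hτV, fun n => ?_⟩
      rw [← (hEk n).2]
      ext a
      simp only [hτdef, Set.mem_inter_iff, Set.mem_union]
      constructor
      · intro h1
        exact ⟨Or.inl h1, hfcI _ h1⟩
      · rintro ⟨h1 | h1, h2⟩
        · exact h1
        · exact absurd (hfO _ _ h1) (fun hO => hIOd a h2 hO)
    have hτnot := hfc τ hτcomp
    have hτφ₂ : φ₂.Sat τ := by
      by_contra hcon
      exact hτnot ⟨hτV, hcon⟩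
    have hagree₂ : ∀ n, τ n ∩ V₂ = σ n ∩ V₂ := by
      intro n
      ext a
      simp only [hτdef, hσdef, hinp, Set.mem_inter_iff, Set.mem_union]
      constructor
      · rintro ⟨h1 | h1, h2⟩
        · exact ⟨Or.inl (Or.inr ⟨h1, h2⟩), h2⟩
        · exact ⟨Or.inr h1, h2⟩
      · rintro ⟨h1 | h1, h2⟩
        · rcases h1 with ⟨h3, _⟩ | ⟨h3, _⟩
          · exact absurd h2 (hd a (hσ₁sub n h3))
          · exact ⟨Or.inl h3, h2⟩
        · exact ⟨Or.inr h1, h2⟩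
    have hσφ₂ : φ₂.Sat σ :=
      (satAt_congr hagree₂ φ₂ (le_refl _) 0).mp hτφ₂
    have hfout : ∀ n, f (p n).1 (inp n) ∩ V₁ = σ₁ n ∩ (O ∩ V₁) := by
      intro n
      have h0 := hσ₁f n
      have e : σ₁ n ∩ (I ∩ V₁) = σ₁ n ∩ I := by
        ext a
        simp only [Set.mem_inter_iff]
        exact ⟨fun ⟨h1, h2, _⟩ => ⟨h1, h2⟩, fun ⟨h1, h2⟩ => ⟨h1, h2, hσ₁sub n h1⟩⟩
      rw [e] at h0
      exact h0
    have hσσ₁ : ∀ n, σ n ∩ V₁ = σ₁ n := by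
      intro n
      ext a
      simp only [hσdef, hinp, Set.mem_inter_iff, Set.mem_union]
      constructor
      · rintro ⟨h1 | h1, h2⟩
        · rcases h1 with ⟨h3, _⟩ | ⟨_, h4⟩
          · exact h3
          · exact absurd h4 (hd a h2)
        · have h5 : a ∈ f (p n).1 (inp n) ∩ V₁ := ⟨h1, h2⟩
          rw [hfout n] at h5
          exact h5.1
      · intro h1
        have haV : a ∈ V₁ := hσ₁sub n h1
        have haV' : a ∈ V := hV₁V haV
        rw [← hpart] at haV'
        rcases haV' with hI | hO
        · exact ⟨Or.inl (Or.inl ⟨h1, hI⟩), haV⟩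
        · have h2 : a ∈ σ₁ n ∩ (O ∩ V₁) := ⟨h1, hO, haV⟩
          rw [← hfout n] at h2
          exact ⟨Or.inr h2.1, haV⟩
    have hsatφ : ¬ ((φ₁.and φ₂).SatAt σ 0) ∨ ψ.SatAt σ 0 := hσφ.2
    have hsatimpl : (φ₁.impl ψ).Sat σ := by
      show ¬ φ₁.SatAt σ 0 ∨ ψ.SatAt σ 0
      rcases hsatφ with h | h
      · by_cases h1 : φ₁.SatAt σ 0
        · exact absurd ⟨h1, hσφ₂⟩ h
        · exact Or.inl h1
      · exact Or.inr h
    have hag : ∀ n, σ n ∩ V₁ = σ₁ n ∩ V₁ := by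
      intro n
      rw [hσσ₁ n]
      exact (Set.inter_eq_left.mpr (hσ₁sub n)).symm
    exact ⟨hσ₁V, (satAt_congr hag (φ₁.impl ψ) (by rw [hpropsImpl]) 0).mp hsatimpl⟩

end SpecDecomp
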